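/- arXiv:1806.02147 — 2 statements merged into one kernel-verified Lean document; each statement's English description precedes it below -/
import Mathlib

section
/- The map Φ restricted to 𝒴⁻ is a bijection from 𝒴⁻ onto 𝒮^T whose inverse sends S to M − S, where M n = sup_{m ≤ n} S m. Precisely: (i) for every S ∈ 𝒮^T, M − S ∈ 𝒴⁻ and Φ(M − S) = S; (ii) if Y, Ỹ ∈ 𝒴⁻ satisfy Φ Y = Φ Ỹ then Y = Ỹ; (iii) for every S ∈ 𝒮^T and every Y ∈ 𝒴 with Φ Y = S, one has M n − S n ≤ Y n for all n ∈ ℤ (i.e. M − S is the minimal carrier). -/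
/-- The past maximum `M n = sup_{m ≤ n} S m` of a two-sided path. -/
noncomputable def ballMax (S : ℤ → ℤ) (n : ℤ) : ℤ := sSup (S '' Set.Iic n)

/-- `S ∈ 𝒮⁰`: a two-sided nearest-neighbour path started at `0`. -/
def inS0 (S : ℤ → ℤ) : Prop := S 0 = 0 ∧ ∀ n : ℤ, |S n - S (n - 1)| = 1

/-- `Y ∈ 𝒴`: a nonnegative carrier path. -/
def inY (Y : ℤ → ℤ) : Prop :=
  (∀ n : ℤ, 0 ≤ Y n) ∧ ∀ n : ℤ, |Y n - Y (n - 1)| = 1 ∨ (Y n = 0 ∧ Y (n - 1) = 0)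

/-- `Y ∈ 𝒴⁻`: a carrier path with `liminf_{n → -∞} Y n = 0`. -/
def inYminus (Y : ℤ → ℤ) : Prop :=
  inY Y ∧ Filter.liminf (fun n : ℤ => ((Y n : ℝ) : EReal)) Filter.atBot = 0

/-- `Φ Y = S`: the path `S` is the configuration-encoding associated with the carrier `Y`. -/
def PhiEq (Y S : ℤ → ℤ) : Prop :=
  S 0 = 0 ∧ ∀ n : ℤ, S n - S (n - 1) = if Y n = Y (n - 1) + 1 then -1 else 1

open Filter Set

lemma step_pm {S : ℤ → ℤ} (hS : inS0 S) (n : ℤ) :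
    S n - S (n - 1) = 1 ∨ S n - S (n - 1) = -1 :=
  (abs_eq (by norm_num : (0:ℤ) ≤ 1)).mp (hS.2 n)

lemma iic_nonempty (S : ℤ → ℤ) (n : ℤ) : (S '' Set.Iic n).Nonempty :=
  ⟨S n, Set.mem_image_of_mem _ (le_refl n)⟩

lemma bdd_all {S : ℤ → ℤ} (hB : BddAbove (S '' Set.Iic 0)) :
    ∀ n : ℤ, BddAbove (S '' Set.Iic n) := by
  have key : ∀ n : ℤ, 0 ≤ n → BddAbove (S '' Set.Iic n) := by
    refine Int.le_induction hB ?_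
    intro k hk ih
    have : Set.Iic (k + 1) = insert (k + 1) (Set.Iic k) := by
      ext x; simp; omega
    rw [this, Set.image_insert_eq]
    exact ih.insert _
  intro n
  rcases le_total n 0 with h | h
  · exact hB.mono (Set.image_mono (Set.Iic_subset_Iic.mpr h))
  · exact key n h

lemma M_rec {S : ℤ → ℤ} (hB : BddAbove (S '' Set.Iic 0)) (n : ℤ) :
    ballMax S n = max (ballMax S (n - 1)) (S n) := by
  have h : Set.Iic n = insert n (Set.Iic (n - 1)) := by ext x; simp; omega
  rw [ballMax, h, Set.image_insert_eq,
    csSup_insert (bdd_all hB (n - 1)) (iic_nonempty S (n - 1))]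
  rw [max_comm]; rfl

lemma S_le_M {S : ℤ → ℤ} (hB : BddAbove (S '' Set.Iic 0)) (n : ℤ) :
    S n ≤ ballMax S n :=
  le_csSup (bdd_all hB n) (Set.mem_image_of_mem _ (le_refl n))

lemma M_mono {S : ℤ → ℤ} (hB : BddAbove (S '' Set.Iic 0)) {m n : ℤ} (h : m ≤ n) :
    ballMax S m ≤ ballMax S n :=
  csSup_le_csSup (bdd_all hB n) (iic_nonempty S m)
    (Set.image_mono (Set.Iic_subset_Iic.mpr h))

lemma exists_zero {S : ℤ → ℤ} (hB : BddAbove (S '' Set.Iic 0)) (m : ℤ) :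
    ∃ n ≤ m, ballMax S n = S n := by
  obtain ⟨n, hn, hSn⟩ := Int.csSup_mem (iic_nonempty S m) (bdd_all hB m)
  refine ⟨n, hn, le_antisymm ?_ (S_le_M hB n)⟩
  calc ballMax S n ≤ ballMax S m := M_mono hB hn
    _ = S n := hSn.symm

/-- determinism of carrier given the path -/
lemma detm {Y S : ℤ → ℤ} (hY : inY Y) (hP : PhiEq Y S) (n : ℤ) :
    Y n = if S n - S (n - 1) = 1 then max (Y (n - 1) - 1) 0 else Y (n - 1) + 1 := by
  have h2 := hP.2 n
  have h4 := hY.1 n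
  have h5 := hY.1 (n - 1)
  by_cases hc : Y n = Y (n - 1) + 1
  · rw [if_pos hc] at h2
    rw [if_neg (by omega)]
    exact hc
  · rw [if_neg hc] at h2
    rw [if_pos h2]
    rcases hY.2 n with h | h
    · rcases (abs_eq (by norm_num : (0:ℤ) ≤ 1)).mp h with h' | h' <;> omega
    · omega

lemma no_strict {Y Y' S : ℤ → ℤ} (hY : inYminus Y) (hY' : inY Y')
    (hP : PhiEq Y S) (hP' : PhiEq Y' S) (m : ℤ) (hm : Y' m < Y m) : False := by
  have key : ∀ n : ℤ, n ≤ m → Y' n < Y n := by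
    refine Int.le_induction_down hm ?_
    intro k hk ih
    · by_contra hcon
      push_neg at hcon
      have e1 := detm hY.1 hP k
      have e2 := detm hY' hP' k
      by_cases hs : S k - S (k - 1) = 1
      · rw [if_pos hs] at e1 e2; omega
      · rw [if_neg hs] at e1 e2; omega
  have hge : ∀ᶠ n in atBot, (1 : EReal) ≤ ((Y n : ℝ) : EReal) := by
    rw [eventually_atBot]
    refine ⟨m, fun n hn => ?_⟩
    have h1 : (1 : ℤ) ≤ Y n := by have := hY'.1 n; have := key n hn; omega
    exact_mod_cast h1
  have := Filter.le_liminf_of_le (by isBoundedDefault) hge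
  rw [hY.2] at this
  exact absurd this (by norm_num)

/-- `Φ` restricted to `𝒴⁻` is a bijection onto `𝒮^T` with inverse
`S ↦ M - S`; moreover `M - S` is the pointwise minimal carrier for `S`. -/
theorem stmt_4 :
    (∀ S : ℤ → ℤ, inS0 S → BddAbove (S '' Set.Iic 0) →
      inYminus (fun n => ballMax S n - S n) ∧ PhiEq (fun n => ballMax S n - S n) S) ∧
    (∀ Y Y' : ℤ → ℤ, inYminus Y → inYminus Y' →
      ∀ S : ℤ → ℤ, PhiEq Y S → PhiEq Y' S → Y = Y') ∧
    (∀ S : ℤ → ℤ, inS0 S → BddAbove (S '' Set.Iic 0) →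
      ∀ Y : ℤ → ℤ, inY Y → PhiEq Y S → ∀ n : ℤ, ballMax S n - S n ≤ Y n) := by
  refine ⟨?_, ?_, ?_⟩
  · intro S hS hB
    have hpos : ∀ n : ℤ, 0 ≤ ballMax S n - S n := fun n => by
      have := S_le_M hB n; omega
    refine ⟨⟨⟨hpos, ?_⟩, ?_⟩, hS.1, ?_⟩
    · intro n
      have h1 := M_rec hB n
      have h2 := S_le_M hB (n - 1)
      beta_reduce
      rcases step_pm hS n with h | h <;>
        · rw [abs_eq (by norm_num : (0:ℤ) ≤ 1)]; omega
    · apply le_antisymm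
      · apply Filter.liminf_le_of_frequently_le'
        rw [frequently_atBot]
        intro m
        obtain ⟨n, hn, h0⟩ := exists_zero hB m
        refine ⟨n, hn, ?_⟩
        beta_reduce
        have : ballMax S n - S n = 0 := by omega
        rw [this]; norm_num
      · apply Filter.le_liminf_of_le (by isBoundedDefault)
        apply Filter.Eventually.of_forall
        intro n
        have := hpos n
        exact_mod_cast this
    · intro n
      have h1 := M_rec hB n
      have h2 := S_le_M hB (n - 1)
      rcases step_pm hS n with h | h
      · rw [if_neg (by beta_reduce; omega)]; exact h
      · rw [if_pos (by beta_reduce; omega)]; exact h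
  · intro Y Y' hY hY' S hP hP'
    funext n
    by_contra hne
    rcases lt_or_gt_of_ne hne with h | h
    · exact no_strict hY' hY.1 hP' hP n h
    · exact no_strict hY hY'.1 hP hP' n h
  · intro S hS hB Y hY hP n
    have mono : ∀ k : ℤ, Y (k - 1) + S (k - 1) ≤ Y k + S k := by
      intro k
      have e := detm hY hP k
      have h4 := hY.1 (k - 1)
      by_cases hs : S k - S (k - 1) = 1
      · rw [if_pos hs] at e; omega
      · rw [if_neg hs] at e
        have h2 := hP.2 k
        rw [if_pos e] at h2
        omega
    have mono2 : ∀ a b : ℤ, a ≤ b → Y a + S a ≤ Y b + S b := by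
      intro a
      refine Int.le_induction (le_refl _) ?_
      intro k hk ih
      have := mono (k + 1)
      simp only [add_sub_cancel_right] at this
      omega
    have hM : ballMax S n ≤ Y n + S n := by
      apply csSup_le (iic_nonempty S n)
      rintro x ⟨m, hm, rfl⟩
      have := hY.1 m
      have := mono2 m n hm
      omega
    omega
end

section
/- Let S ∈ 𝒮^T satisfy limsup_{n→+∞} S n = sup_{n∈ℤ} S n. Then for every n ∈ ℤ the set {(T S) m : m ≥ n} is bounded below and inf_{m ≥ n} (T S) m = M n − 2 M 0; equivalently (T S) n − inf_{m ≥ n} (T S) m = M n − S n = W n. Dually, if S ∈ 𝒮^{T⁻¹} satisfies liminf_{n→−∞} S n = inf_{n∈ℤ} S n, then for every n ∈ ℤ, sup_{m ≤ n} (T⁻¹ S) m = I n − 2 I 0, and sup_{m ≤ n} (T⁻¹ S) m − (T⁻¹ S) n = S n − I n = V n. -/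
/-- The future minimum `I n = inf_{m ≥ n} S m` of a two-sided path. -/
noncomputable def ballMin (S : ℤ → ℤ) (n : ℤ) : ℤ := sInf (S '' Set.Ici n)

/-- Pitman's transform `(TS) n = 2 M n - S n - 2 M 0`. -/
noncomputable def Tbb (S : ℤ → ℤ) : ℤ → ℤ := fun n => 2 * ballMax S n - S n - 2 * ballMax S 0

/-- The inverse transform `(T⁻¹S) n = 2 I n - S n - 2 I 0`. -/
noncomputable def TbbInv (S : ℤ → ℤ) : ℤ → ℤ := fun n => 2 * ballMin S n - S n - 2 * ballMin S 0

/-- `limsup_{n → +∞} S n = sup_{n ∈ ℤ} S n`, as elements of `ℤ ∪ {+∞}` (via `EReal`). -/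
def limsupEq (S : ℤ → ℤ) : Prop :=
  Filter.limsup (fun n : ℤ => ((S n : ℝ) : EReal)) Filter.atTop = ⨆ n : ℤ, ((S n : ℝ) : EReal)

/-- `liminf_{n → -∞} S n = inf_{n ∈ ℤ} S n`, as elements of `ℤ ∪ {-∞}` (via `EReal`). -/
def liminfEq (S : ℤ → ℤ) : Prop :=
  Filter.liminf (fun n : ℤ => ((S n : ℝ) : EReal)) Filter.atBot = ⨅ n : ℤ, ((S n : ℝ) : EReal)

section Aux

variable {S : ℤ → ℤ}

/- ### Part 1 auxiliary lemmas -/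

lemma myBddAbove_Iic (hB : BddAbove (S '' Set.Iic 0)) (n : ℤ) : BddAbove (S '' Set.Iic n) := by
  have h1 : S '' Set.Iic n ⊆ S '' Set.Iic 0 ∪ S '' Set.Icc 0 n := by
    rintro x ⟨m, hm, rfl⟩
    rcases le_or_gt m 0 with h | h
    · exact Or.inl ⟨m, h, rfl⟩
    · exact Or.inr ⟨m, ⟨h.le, hm⟩, rfl⟩
  exact BddAbove.mono h1 (hB.union ((Set.finite_Icc 0 n).image S).bddAbove)

lemma le_ballMax (hB : BddAbove (S '' Set.Iic 0)) {m n : ℤ} (h : m ≤ n) :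
    S m ≤ ballMax S n :=
  le_csSup (myBddAbove_Iic hB n) ⟨m, Set.mem_Iic.mpr h, rfl⟩

lemma ballMax_le {n c : ℤ} (h : ∀ m ≤ n, S m ≤ c) : ballMax S n ≤ c :=
  csSup_le ⟨S n, ⟨n, Set.mem_Iic.mpr le_rfl, rfl⟩⟩ (by rintro x ⟨m, hm, rfl⟩; exact h m hm)

lemma ballMax_mono (hB : BddAbove (S '' Set.Iic 0)) {m n : ℤ} (h : m ≤ n) :
    ballMax S m ≤ ballMax S n :=
  ballMax_le (fun k hk => le_ballMax hB (hk.trans h))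

lemma ballMax_mem (hB : BddAbove (S '' Set.Iic 0)) (n : ℤ) :
    ∃ j ≤ n, S j = ballMax S n := by
  obtain ⟨j, hj, hje⟩ := Int.csSup_mem (s := S '' Set.Iic n) ⟨S n, ⟨n, Set.mem_Iic.mpr le_rfl, rfl⟩⟩
    (myBddAbove_Iic hB n)
  exact ⟨j, hj, hje⟩

/-- From the limsup condition: for every `n` there is `m ≥ n` with `S m ≥ M n`. -/
lemma exists_ge_ballMax (hB : BddAbove (S '' Set.Iic 0)) (hL : limsupEq S) (n : ℤ) :
    ∃ m, n ≤ m ∧ ballMax S n ≤ S m := by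
  by_contra hcon
  push_neg at hcon
  set a := ballMax S n with ha
  have hev : ∀ᶠ m in Filter.atTop, ((S m : ℝ) : EReal) ≤ (((a - 1 : ℤ) : ℝ) : EReal) := by
    filter_upwards [Filter.eventually_ge_atTop n] with m hm
    have h5 : S m ≤ a - 1 := by have := hcon m hm; omega
    exact EReal.coe_le_coe_iff.mpr (by exact_mod_cast h5)
  have h1 : Filter.limsup (fun m : ℤ => ((S m : ℝ) : EReal)) Filter.atTop
      ≤ (((a - 1 : ℤ) : ℝ) : EReal) := Filter.limsup_le_of_le (by isBoundedDefault) hev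
  obtain ⟨j, _, hje⟩ := ballMax_mem hB n
  have h2 : ((a : ℝ) : EReal) ≤ Filter.limsup (fun m : ℤ => ((S m : ℝ) : EReal)) Filter.atTop := by
    rw [hL]
    calc ((a : ℝ) : EReal) = ((S j : ℝ) : EReal) := by rw [hje]
      _ ≤ ⨆ m : ℤ, ((S m : ℝ) : EReal) := le_iSup (fun m : ℤ => ((S m : ℝ) : EReal)) j
  have h3 : ((a : ℝ) : EReal) ≤ (((a - 1 : ℤ) : ℝ) : EReal) := h2.trans h1
  have h4 : (a : ℝ) ≤ ((a - 1 : ℤ) : ℝ) := EReal.coe_le_coe_iff.mp h3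
  have : a ≤ a - 1 := by exact_mod_cast h4
  omega

/-- Key existence: some `m ≥ n` with `S m = M m = M n`. -/
lemma exists_hit (hS : inS0 S) (hB : BddAbove (S '' Set.Iic 0)) (hL : limsupEq S) (n : ℤ) :
    ∃ m, n ≤ m ∧ S m = ballMax S n ∧ ballMax S m = ballMax S n := by
  set a := ballMax S n with ha
  obtain ⟨m0, hm0, hm0a⟩ := exists_ge_ballMax hB hL n
  have hP : ∃ k : ℕ, a ≤ S (n + k) := by
    refine ⟨(m0 - n).toNat, ?_⟩
    rwa [Int.toNat_of_nonneg (by omega), show n + (m0 - n) = m0 by ring]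
  classical
  set k0 := Nat.find hP with hk0
  have hhit : a ≤ S (n + k0) := Nat.find_spec hP
  have hmin : ∀ j : ℕ, j < k0 → S (n + j) ≤ a - 1 := by
    intro j hj
    have := Nat.find_min hP hj
    omega
  set m := n + (k0 : ℤ) with hm
  have hnm : n ≤ m := by rw [hm]; omega
  have hle : S m ≤ a := by
    rcases Nat.eq_zero_or_pos k0 with h0 | h0
    · rw [hm, h0]; simpa using le_ballMax hB (le_refl n)
    · have h1 : S (n + ((k0 - 1 : ℕ) : ℤ)) ≤ a - 1 := hmin (k0 - 1) (by omega)
      have h2 := abs_le.mp (le_of_eq (hS.2 m))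
      have h3 : m - 1 = n + ((k0 - 1 : ℕ) : ℤ) := by rw [hm]; omega
      rw [h3] at h2
      omega
  have hSm : S m = a := le_antisymm hle hhit
  refine ⟨m, hnm, hSm, le_antisymm ?_ (ballMax_mono hB hnm)⟩
  refine ballMax_le fun p hp => ?_
  rcases le_or_gt p n with h | h
  · exact le_ballMax hB h
  · have hpn : p = n + ((p - n).toNat : ℤ) := by
      rw [Int.toNat_of_nonneg (by omega)]; ring
    set i := (p - n).toNat with hi
    have hik : i ≤ k0 := by
      have : (i : ℤ) ≤ (k0 : ℤ) := by rw [hi, Int.toNat_of_nonneg (by omega)]; omega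
      exact_mod_cast this
    rcases eq_or_lt_of_le hik with he | hlt
    · rw [hpn, he]; exact hSm.le
    · have := hmin i hlt; rw [hpn]; omega

/- ### Part 2 auxiliary lemmas (mirror) -/

lemma myBddBelow_Ici (hB : BddBelow (S '' Set.Ici 0)) (n : ℤ) : BddBelow (S '' Set.Ici n) := by
  have h1 : S '' Set.Ici n ⊆ S '' Set.Ici 0 ∪ S '' Set.Icc n 0 := by
    rintro x ⟨m, hm, rfl⟩
    rcases le_or_gt 0 m with h | h
    · exact Or.inl ⟨m, h, rfl⟩
    · exact Or.inr ⟨m, ⟨hm, h.le⟩, rfl⟩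
  exact BddBelow.mono h1 (hB.union ((Set.finite_Icc n 0).image S).bddBelow)

lemma ballMin_le (hB : BddBelow (S '' Set.Ici 0)) {m n : ℤ} (h : n ≤ m) :
    ballMin S n ≤ S m :=
  csInf_le (myBddBelow_Ici hB n) ⟨m, Set.mem_Ici.mpr h, rfl⟩

lemma le_ballMin {n c : ℤ} (h : ∀ m, n ≤ m → c ≤ S m) : c ≤ ballMin S n :=
  le_csInf ⟨S n, ⟨n, Set.mem_Ici.mpr le_rfl, rfl⟩⟩ (by rintro x ⟨m, hm, rfl⟩; exact h m hm)

lemma ballMin_mono (hB : BddBelow (S '' Set.Ici 0)) {m n : ℤ} (h : m ≤ n) :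
    ballMin S m ≤ ballMin S n :=
  le_ballMin (fun k hk => ballMin_le hB (h.trans hk))

lemma ballMin_mem (hB : BddBelow (S '' Set.Ici 0)) (n : ℤ) :
    ∃ j, n ≤ j ∧ S j = ballMin S n := by
  obtain ⟨j, hj, hje⟩ := Int.csInf_mem (s := S '' Set.Ici n) ⟨S n, ⟨n, Set.mem_Ici.mpr le_rfl, rfl⟩⟩
    (myBddBelow_Ici hB n)
  exact ⟨j, hj, hje⟩

lemma exists_le_ballMin (hB : BddBelow (S '' Set.Ici 0)) (hL : liminfEq S) (n : ℤ) :
    ∃ m, m ≤ n ∧ S m ≤ ballMin S n := by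
  by_contra hcon
  push_neg at hcon
  set a := ballMin S n with ha
  have hev : ∀ᶠ m in Filter.atBot, (((a + 1 : ℤ) : ℝ) : EReal) ≤ ((S m : ℝ) : EReal) := by
    filter_upwards [Filter.eventually_le_atBot n] with m hm
    have h5 : a + 1 ≤ S m := by have := hcon m hm; omega
    exact EReal.coe_le_coe_iff.mpr (by exact_mod_cast h5)
  have h1 : (((a + 1 : ℤ) : ℝ) : EReal)
      ≤ Filter.liminf (fun m : ℤ => ((S m : ℝ) : EReal)) Filter.atBot :=
    Filter.le_liminf_of_le (by isBoundedDefault) hev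
  obtain ⟨j, _, hje⟩ := ballMin_mem hB n
  have h2 : Filter.liminf (fun m : ℤ => ((S m : ℝ) : EReal)) Filter.atBot ≤ ((a : ℝ) : EReal) := by
    rw [hL]
    calc ⨅ m : ℤ, ((S m : ℝ) : EReal) ≤ ((S j : ℝ) : EReal) := iInf_le (fun m : ℤ => ((S m : ℝ) : EReal)) j
      _ = ((a : ℝ) : EReal) := by rw [hje]
  have h3 : (((a + 1 : ℤ) : ℝ) : EReal) ≤ ((a : ℝ) : EReal) := h1.trans h2
  have h4 : ((a + 1 : ℤ) : ℝ) ≤ (a : ℝ) := EReal.coe_le_coe_iff.mp h3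
  have : a + 1 ≤ a := by exact_mod_cast h4
  omega

lemma exists_hit' (hS : inS0 S) (hB : BddBelow (S '' Set.Ici 0)) (hL : liminfEq S) (n : ℤ) :
    ∃ m, m ≤ n ∧ S m = ballMin S n ∧ ballMin S m = ballMin S n := by
  set a := ballMin S n with ha
  obtain ⟨m0, hm0, hm0a⟩ := exists_le_ballMin hB hL n
  have hP : ∃ k : ℕ, S (n - k) ≤ a := by
    refine ⟨(n - m0).toNat, ?_⟩
    rwa [Int.toNat_of_nonneg (by omega), show n - (n - m0) = m0 by ring]
  classical
  set k0 := Nat.find hP with hk0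
  have hhit : S (n - k0) ≤ a := Nat.find_spec hP
  have hmin : ∀ j : ℕ, j < k0 → a + 1 ≤ S (n - j) := by
    intro j hj
    have := Nat.find_min hP hj
    omega
  set m := n - (k0 : ℤ) with hm
  have hnm : m ≤ n := by rw [hm]; omega
  have hge : a ≤ S m := by
    rcases Nat.eq_zero_or_pos k0 with h0 | h0
    · rw [hm, h0]; simpa using ballMin_le hB (le_refl n)
    · have h1 : a + 1 ≤ S (n - ((k0 - 1 : ℕ) : ℤ)) := hmin (k0 - 1) (by omega)
      have h2 := abs_le.mp (le_of_eq (hS.2 (n - ((k0 - 1 : ℕ) : ℤ))))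
      have h3 : n - ((k0 - 1 : ℕ) : ℤ) - 1 = m := by rw [hm]; omega
      rw [h3] at h2
      omega
  have hSm : S m = a := le_antisymm hhit hge
  refine ⟨m, hnm, hSm, le_antisymm (ballMin_mono hB hnm) ?_⟩
  refine le_ballMin fun p hp => ?_
  rcases le_or_gt n p with h | h
  · exact ballMin_le hB h
  · have hpn : p = n - ((n - p).toNat : ℤ) := by
      rw [Int.toNat_of_nonneg (by omega)]; ring
    set i := (n - p).toNat with hi
    have hik : i ≤ k0 := by
      have : (i : ℤ) ≤ (k0 : ℤ) := by rw [hi, Int.toNat_of_nonneg (by omega)]; omega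
      exact_mod_cast this
    rcases eq_or_lt_of_le hik with he | hlt
    · rw [hpn, he]; exact hSm.ge
    · have := hmin i hlt; rw [hpn]; omega

end Aux

/-- For `S ∈ 𝒮^T` with `limsup_{n→+∞} S n = sup_n S n`, the future minimum
of `TS` equals `M - 2 M 0`, so `TS - I^{TS} = M - S = W`; dually for `S ∈ 𝒮^{T⁻¹}` with
`liminf_{n→-∞} S n = inf_n S n`, the past maximum of `T⁻¹S` equals `I - 2 I 0`, so
`M^{T⁻¹S} - T⁻¹S = S - I = V`. -/
theorem stmt_7 :
    (∀ S : ℤ → ℤ, inS0 S → BddAbove (S '' Set.Iic 0) → limsupEq S →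
      ∀ n : ℤ, BddBelow (Tbb S '' Set.Ici n) ∧
        sInf (Tbb S '' Set.Ici n) = ballMax S n - 2 * ballMax S 0 ∧
        Tbb S n - sInf (Tbb S '' Set.Ici n) = ballMax S n - S n) ∧
    (∀ S : ℤ → ℤ, inS0 S → BddBelow (S '' Set.Ici 0) → liminfEq S →
      ∀ n : ℤ, BddAbove (TbbInv S '' Set.Iic n) ∧
        sSup (TbbInv S '' Set.Iic n) = ballMin S n - 2 * ballMin S 0 ∧
        sSup (TbbInv S '' Set.Iic n) - TbbInv S n = S n - ballMin S n) := by
  constructor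
  · intro S hS hB hL n
    have hlow : ∀ x ∈ Tbb S '' Set.Ici n, ballMax S n - 2 * ballMax S 0 ≤ x := by
      rintro x ⟨m, hm, rfl⟩
      have h1 : S m ≤ ballMax S m := le_ballMax hB le_rfl
      have h2 : ballMax S n ≤ ballMax S m := ballMax_mono hB hm
      simp only [Tbb]
      omega
    have hbdd : BddBelow (Tbb S '' Set.Ici n) := ⟨ballMax S n - 2 * ballMax S 0, hlow⟩
    obtain ⟨m, hnm, hSm, hMm⟩ := exists_hit hS hB hL n
    have hmem : ballMax S n - 2 * ballMax S 0 ∈ Tbb S '' Set.Ici n := by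
      refine ⟨m, hnm, ?_⟩
      simp only [Tbb]
      omega
    have hinf : sInf (Tbb S '' Set.Ici n) = ballMax S n - 2 * ballMax S 0 :=
      le_antisymm (csInf_le hbdd hmem) (le_csInf ⟨_, hmem⟩ hlow)
    refine ⟨hbdd, hinf, ?_⟩
    rw [hinf]; simp only [Tbb]; ring
  · intro S hS hB hL n
    have hup : ∀ x ∈ TbbInv S '' Set.Iic n, x ≤ ballMin S n - 2 * ballMin S 0 := by
      rintro x ⟨m, hm, rfl⟩
      have h1 : ballMin S m ≤ S m := ballMin_le hB le_rfl
      have h2 : ballMin S m ≤ ballMin S n := ballMin_mono hB hm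
      simp only [TbbInv]
      omega
    have hbdd : BddAbove (TbbInv S '' Set.Iic n) := ⟨ballMin S n - 2 * ballMin S 0, hup⟩
    obtain ⟨m, hnm, hSm, hMm⟩ := exists_hit' hS hB hL n
    have hmem : ballMin S n - 2 * ballMin S 0 ∈ TbbInv S '' Set.Iic n := by
      refine ⟨m, hnm, ?_⟩
      simp only [TbbInv]
      omega
    have hsup : sSup (TbbInv S '' Set.Iic n) = ballMin S n - 2 * ballMin S 0 :=
      le_antisymm (csSup_le ⟨_, hmem⟩ hup) (le_csSup hbdd hmem)
    refine ⟨hbdd, hsup, ?_⟩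
    rw [hsup]; simp only [TbbInv]; ring
end
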